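/- For all integers d ≥ 1, k ≥ 1, all integers r, s_Y, s_Z with 0 ≤ r ≤ k, 0 ≤ s_Y ≤ k, 0 ≤ s_Z ≤ min(k−r, k−s_Y), and every integer q with 3k − r − s = q, where s := s_Y + s_Z, one has ∫_{(B)^{3k−r−s}} h_1(y_0,…,y_{k−1}) · h_1(y_0,…,y_{r−1}, z_0,…,z_{k−r−1}) · h_1(y_0,…,y_{s_Y−1}, z_0,…,z_{s_Z−1}, w_0,…,w_{k−s−1}) dy dz dw ≤ ( (k+1)·((q−k)/2 + 1)² )^d, where B := [−1,1]^d ⊂ ℝ^d. -/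

import Mathlib

open MeasureTheory Set
open scoped ENNReal

open Classical in
/-- The indicator of a proposition, as a real number. -/
noncomputable def ind (p : Prop) : ℝ := if p then 1 else 0

/-- All points of a set `P ⊆ ℝ^d` (with the sup norm) are pairwise within distance `δ`. -/
def closeP {d : ℕ} (δ : ℝ) (P : Set (Fin d → ℝ)) : Prop :=
  ∀ a ∈ P, ∀ b ∈ P, ‖a - b‖ ≤ δ


lemma oneDim (n : ℕ) :
    volume ((Set.univ.pi fun _ : Fin n => Set.Icc (-1:ℝ) 1) ∩
      {x : Fin n → ℝ | ∀ i j, |x i - x j| ≤ 1}) ≤ ENNReal.ofReal (n + 1) := by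
  rcases n with _ | n'
  · refine le_trans (measure_mono (Set.subset_univ _)) ?_
    rw [volume_pi, ← Set.pi_univ Set.univ, Measure.pi_pi]
    simp
  set n := n' + 1
  set m : ℝ → ℝ := fun t => min (t + 1) 1 with hm
  set S : Fin n → Set (Fin n → ℝ) :=
    fun i => {x | -1 ≤ x i ∧ ∀ j, x i ≤ x j ∧ x j ≤ m (x i)} with hS
  have cover : ((Set.univ.pi fun _ : Fin n => Set.Icc (-1:ℝ) 1) ∩
      {x : Fin n → ℝ | ∀ i j, |x i - x j| ≤ 1}) ⊆ ⋃ i, S i := by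
    rintro x ⟨hbox, hcl⟩
    obtain ⟨i₀, -, hmin⟩ := Finset.exists_min_image Finset.univ x ⟨0, Finset.mem_univ 0⟩
    refine Set.mem_iUnion.2 ⟨i₀, (hbox i₀ trivial).1, fun j => ⟨hmin j (Finset.mem_univ j), ?_⟩⟩
    have h1 : x j ≤ x i₀ + 1 := by have := abs_le.1 (hcl j i₀); linarith [this.2]
    exact le_min h1 (hbox j trivial).2
  have hSi : ∀ i, volume (S i) ≤ 1 + ENNReal.ofReal (1 / n) := by
    intro i
    set e := MeasurableEquiv.piFinSuccAbove (fun _ : Fin (n' + 1) => ℝ) i with he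
    have hmp := volume_preserving_piFinSuccAbove (fun _ : Fin (n' + 1) => ℝ) i
    set G : Set (ℝ × (Fin n' → ℝ)) :=
      {p | (-1 ≤ p.1 ∧ p.1 ≤ 1) ∧ ∀ j, p.1 ≤ p.2 j ∧ p.2 j ≤ m p.1} with hG
    have hGm : MeasurableSet G := by
      have : G = ({p : ℝ × (Fin n' → ℝ) | -1 ≤ p.1} ∩ {p | p.1 ≤ 1}) ∩
          ⋂ j, ({p : ℝ × (Fin n' → ℝ) | p.1 ≤ p.2 j} ∩ {p | p.2 j ≤ m p.1}) := by
        ext p; simp [hG, Set.mem_iInter, forall_and]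
      rw [this]
      have hc1 : Continuous fun p : ℝ × (Fin n' → ℝ) => p.1 := continuous_fst
      refine MeasurableSet.inter (MeasurableSet.inter ?_ ?_) (MeasurableSet.iInter fun j => MeasurableSet.inter ?_ ?_)
      · exact (isClosed_le continuous_const hc1).measurableSet
      · exact (isClosed_le hc1 continuous_const).measurableSet
      · exact (isClosed_le hc1 ((continuous_apply j).comp continuous_snd)).measurableSet
      · exact (isClosed_le ((continuous_apply j).comp continuous_snd)
          ((hc1.add continuous_const).min continuous_const)).measurableSet
    have hsub : S i ⊆ e ⁻¹' G := by
      intro x hx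
      obtain ⟨h1, h2⟩ := hx
      have hxi : x i ≤ 1 := le_trans (h2 i).2 (min_le_right _ _)
      simp only [Set.mem_preimage, he, MeasurableEquiv.piFinSuccAbove_apply, hG, Set.mem_setOf_eq]
      exact ⟨⟨h1, hxi⟩, fun j => h2 (i.succAbove j)⟩
    calc volume (S i) ≤ volume (e ⁻¹' G) := measure_mono hsub
      _ = volume G := hmp.measure_preimage hGm.nullMeasurableSet
      _ ≤ 1 + ENNReal.ofReal (1 / n) := by
          rw [Measure.volume_eq_prod, Measure.prod_apply hGm]
          have hsec : ∀ t : ℝ, volume (Prod.mk t ⁻¹' G) =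
              (Set.Icc (-1:ℝ) 1).indicator (fun t => ENNReal.ofReal (m t - t) ^ n') t := by
            intro t
            by_cases ht : t ∈ Set.Icc (-1:ℝ) 1
            · rw [Set.indicator_of_mem ht]
              have : Prod.mk t ⁻¹' G = Set.univ.pi fun _ : Fin n' => Set.Icc t (m t) := by
                ext y
                simp [hG, ht.1, ht.2, Set.mem_pi, Pi.le_def, forall_and]
              rw [this, volume_pi, Measure.pi_pi]
              simp [Real.volume_Icc]
            · rw [Set.indicator_of_notMem ht]
              have : Prod.mk t ⁻¹' G = (∅ : Set (Fin n' → ℝ)) := by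
                ext y
                simp only [Set.mem_preimage, hG, Set.mem_setOf_eq, Set.mem_empty_iff_false, iff_false]
                rintro ⟨⟨ha, hb⟩, -⟩
                exact ht ⟨ha, hb⟩
              rw [this, measure_empty]
          calc (∫⁻ t, volume (Prod.mk t ⁻¹' G)) =
              ∫⁻ t in Set.Icc (-1:ℝ) 1, ENNReal.ofReal (m t - t) ^ n' := by
                simp_rw [hsec]
                rw [lintegral_indicator measurableSet_Icc]
            _ ≤ 1 + ENNReal.ofReal (1 / n) := by
                rw [show Set.Icc (-1:ℝ) 1 = Set.Icc (-1:ℝ) 0 ∪ Set.Ioc (0:ℝ) 1 from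
                  (Set.Icc_union_Ioc_eq_Icc (by norm_num) (by norm_num)).symm]
                refine le_trans (lintegral_union_le _ _ _) (add_le_add ?_ ?_)
                · calc ∫⁻ t in Set.Icc (-1:ℝ) 0, ENNReal.ofReal (m t - t) ^ n'
                      ≤ ∫⁻ _ in Set.Icc (-1:ℝ) 0, 1 := by
                        refine lintegral_mono fun t => ?_
                        refine pow_le_one' ?_ n'
                        refine ENNReal.ofReal_le_one.2 ?_
                        have : m t ≤ t + 1 := min_le_left _ _
                        linarith
                    _ = 1 := by rw [setLIntegral_one, Real.volume_Icc]; norm_num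
                · have heq : ∫⁻ t in Set.Ioc (0:ℝ) 1, ENNReal.ofReal (m t - t) ^ n'
                      = ∫⁻ t in Set.Ioc (0:ℝ) 1, ENNReal.ofReal ((1 - t) ^ n') := by
                      refine setLIntegral_congr_fun measurableSet_Ioc (fun t ht => ?_)
                      have hmt : m t = 1 := min_eq_right (by linarith [ht.1])
                      rw [hmt, ENNReal.ofReal_pow (by linarith [ht.2])]
                  rw [heq]
                  have hint : IntegrableOn (fun t : ℝ => (1 - t) ^ n') (Set.Ioc (0:ℝ) 1) := by
                    apply Continuous.integrableOn_Ioc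
                    continuity
                  rw [← ofReal_integral_eq_lintegral_ofReal hint
                    ((ae_restrict_iff' measurableSet_Ioc).2 (ae_of_all _ fun t ht =>
                      pow_nonneg (by linarith [ht.2]) n'))]
                  refine ENNReal.ofReal_le_ofReal ?_
                  have : ∫ t in Set.Ioc (0:ℝ) 1, (1 - t) ^ n' = ∫ t in (0:ℝ)..1, (1 - t) ^ n' := by
                    rw [intervalIntegral.integral_of_le (by norm_num)]
                  rw [this, intervalIntegral.integral_comp_sub_left (fun u => u ^ n') 1]
                  have hcast : (n : ℝ) = (n' : ℝ) + 1 := by exact_mod_cast rfl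
                  rw [hcast]
                  norm_num [integral_pow]
  calc volume ((Set.univ.pi fun _ : Fin n => Set.Icc (-1:ℝ) 1) ∩
      {x : Fin n → ℝ | ∀ i j, |x i - x j| ≤ 1}) ≤ volume (⋃ i, S i) := measure_mono cover
    _ ≤ ∑ i : Fin n, volume (S i) := measure_iUnion_fintype_le _ _
    _ ≤ ∑ _i : Fin n, (1 + ENNReal.ofReal (1 / n)) := Finset.sum_le_sum fun i _ => hSi i
    _ = n * (1 + ENNReal.ofReal (1 / n)) := by
        rw [Finset.sum_const, Finset.card_univ, Fintype.card_fin, nsmul_eq_mul]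
    _ ≤ ENNReal.ofReal (n + 1) := by
        have hn : (0:ℝ) < n := by positivity
        rw [show ((n : ℝ≥0∞)) = ENNReal.ofReal (n : ℝ) by simp,
          ← ENNReal.ofReal_one, ← ENNReal.ofReal_add (by norm_num) (by positivity),
          ← ENNReal.ofReal_mul (by positivity)]
        refine ENNReal.ofReal_le_ofReal ?_
        rw [mul_add, mul_one_div, div_self (ne_of_gt hn)]
        linarith

lemma blockBound' (n : ℕ) : ∀ d : ℕ,
    volume ((Set.univ.pi fun _ : Fin n => Set.univ.pi fun _ : Fin d => Set.Icc (-1:ℝ) 1) ∩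
      {x : Fin n → Fin d → ℝ | ∀ i j c, |x i c - x j c| ≤ 1}) ≤ ENNReal.ofReal (n + 1) ^ d := by
  intro d
  induction d with
  | zero =>
    refine le_trans (measure_mono (Set.subset_univ _)) ?_
    have h0 : (volume (Set.univ : Set (Fin 0 → ℝ))) = 1 := by
      rw [volume_pi, ← Set.pi_univ Set.univ, Measure.pi_pi]; simp
    rw [volume_pi, ← Set.pi_univ Set.univ, Measure.pi_pi]
    simp [h0]
  | succ d ih =>
    set e := MeasurableEquiv.piFinSuccAbove (fun _ : Fin (d + 1) => ℝ) 0 with he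
    have h1 : MeasurePreserving (fun (x : Fin n → Fin (d + 1) → ℝ) (i : Fin n) => e (x i))
        volume volume :=
      volume_preserving_pi fun _ => volume_preserving_piFinSuccAbove (fun _ : Fin (d+1) => ℝ) 0
    have h2 : MeasurePreserving
        (MeasurableEquiv.arrowProdEquivProdArrow ℝ (Fin d → ℝ) (Fin n)) volume volume := by
      have := measurePreserving_arrowProdEquivProdArrow ℝ (Fin d → ℝ) (Fin n)
        (fun _ => (volume : Measure ℝ)) (fun _ => (volume : Measure (Fin d → ℝ)))
      simpa [Measure.volume_eq_prod, volume_pi] using this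
    have hF := h2.comp h1
    set A1 : Set (Fin n → ℝ) := (Set.univ.pi fun _ : Fin n => Set.Icc (-1:ℝ) 1) ∩
      {y : Fin n → ℝ | ∀ i j, |y i - y j| ≤ 1} with hA1
    set Ad : Set (Fin n → Fin d → ℝ) :=
      (Set.univ.pi fun _ : Fin n => Set.univ.pi fun _ : Fin d => Set.Icc (-1:ℝ) 1) ∩
      {x : Fin n → Fin d → ℝ | ∀ i j c, |x i c - x j c| ≤ 1} with hAd
    have hA1m : MeasurableSet A1 := by
      refine (MeasurableSet.univ_pi fun _ => measurableSet_Icc).inter ?_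
      have : {y : Fin n → ℝ | ∀ i j, |y i - y j| ≤ 1} =
          ⋂ i, ⋂ j, {y : Fin n → ℝ | |y i - y j| ≤ 1} := by
        ext y; simp [Set.mem_iInter]
      rw [this]
      exact MeasurableSet.iInter fun i => MeasurableSet.iInter fun j =>
        (isClosed_le ((continuous_apply i).sub (continuous_apply j)).abs
          continuous_const).measurableSet
    have hAdm : MeasurableSet Ad := by
      refine (MeasurableSet.univ_pi fun _ => MeasurableSet.univ_pi fun _ =>
        measurableSet_Icc).inter ?_
      have : {x : Fin n → Fin d → ℝ | ∀ i j c, |x i c - x j c| ≤ 1} =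
          ⋂ i, ⋂ j, ⋂ c, {x : Fin n → Fin d → ℝ | |x i c - x j c| ≤ 1} := by
        ext x; simp [Set.mem_iInter]
      rw [this]
      exact MeasurableSet.iInter fun i => MeasurableSet.iInter fun j =>
        MeasurableSet.iInter fun c =>
        (isClosed_le ((continuous_apply_apply i c).sub
          (continuous_apply_apply j c)).abs continuous_const).measurableSet
    have hsub : ((Set.univ.pi fun _ : Fin n => Set.univ.pi fun _ : Fin (d+1) => Set.Icc (-1:ℝ) 1) ∩
        {x : Fin n → Fin (d+1) → ℝ | ∀ i j c, |x i c - x j c| ≤ 1}) ⊆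
        ((MeasurableEquiv.arrowProdEquivProdArrow ℝ (Fin d → ℝ) (Fin n)) ∘
          fun (x : Fin n → Fin (d+1) → ℝ) (i : Fin n) => e (x i)) ⁻¹' (A1 ×ˢ Ad) := by
      rintro x ⟨hbox, hcl⟩
      have happ : ∀ i : Fin n, e (x i) = (x i 0, fun c : Fin d => x i c.succ) := by
        intro i
        simp only [he, MeasurableEquiv.piFinSuccAbove_apply]
        exact Prod.ext rfl (funext fun c => by simp [Fin.tail])
      simp only [Set.mem_preimage, Function.comp_apply, Set.mem_prod, happ,
        MeasurableEquiv.arrowProdEquivProdArrow, Equiv.arrowProdEquivProdArrow,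
        MeasurableEquiv.coe_mk, Equiv.coe_fn_mk]
      refine ⟨⟨fun i _ => (hbox i trivial) 0 trivial, fun i j => hcl i j 0⟩,
        ⟨fun i _ c _ => (hbox i trivial) c.succ trivial, fun i j c => hcl i j c.succ⟩⟩
    calc volume ((Set.univ.pi fun _ : Fin n => Set.univ.pi fun _ : Fin (d+1) => Set.Icc (-1:ℝ) 1) ∩
        {x : Fin n → Fin (d+1) → ℝ | ∀ i j c, |x i c - x j c| ≤ 1})
        ≤ volume (((MeasurableEquiv.arrowProdEquivProdArrow ℝ (Fin d → ℝ) (Fin n)) ∘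
          fun (x : Fin n → Fin (d+1) → ℝ) (i : Fin n) => e (x i)) ⁻¹' (A1 ×ˢ Ad)) :=
          measure_mono hsub
      _ = volume (A1 ×ˢ Ad) := hF.measure_preimage (hA1m.prod hAdm).nullMeasurableSet
      _ = volume A1 * volume Ad := by rw [Measure.volume_eq_prod, Measure.prod_prod]
      _ ≤ ENNReal.ofReal (n + 1) * ENNReal.ofReal (n + 1) ^ d := mul_le_mul' (oneDim n) ih
      _ = ENNReal.ofReal (n + 1) ^ (d + 1) := by ring


lemma ind_nonneg (p : Prop) : 0 ≤ ind p := by unfold ind; split <;> norm_num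

lemma ind_le_one (p : Prop) : ind p ≤ 1 := by unfold ind; split <;> norm_num

lemma ind_eq_zero {p : Prop} (h : ¬ p) : ind p = 0 := by unfold ind; split <;> tauto

lemma closeP_mono {d : ℕ} {δ : ℝ} {P Q : Set (Fin d → ℝ)} (h : closeP δ P) (hQ : Q ⊆ P) :
    closeP δ Q := fun a ha b hb => h a (hQ ha) b (hQ hb)

lemma closeP_set_eq (d n : ℕ) : {x : Fin n → Fin d → ℝ | closeP 1 (Set.range x)} =
    {x : Fin n → Fin d → ℝ | ∀ i j c, |x i c - x j c| ≤ 1} := by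
  ext x
  constructor
  · intro h i j c
    have h1 := h (x i) ⟨i, rfl⟩ (x j) ⟨j, rfl⟩
    have h2 := norm_le_pi_norm (x i - x j) c
    rw [Pi.sub_apply, Real.norm_eq_abs] at h2
    linarith
  · rintro h a ⟨i, rfl⟩ b ⟨j, rfl⟩
    rw [pi_norm_le_iff_of_nonneg zero_le_one]
    intro c
    rw [Pi.sub_apply, Real.norm_eq_abs]
    exact h i j c

lemma blockBound (d n : ℕ) :
    volume ((Set.univ.pi fun _ : Fin n => Set.univ.pi fun _ : Fin d => Set.Icc (-1:ℝ) 1) ∩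
      {x : Fin n → Fin d → ℝ | closeP 1 (Set.range x)}) ≤ ENNReal.ofReal (n + 1) ^ d := by
  rw [closeP_set_eq]
  exact blockBound' n d

lemma measurableSet_closeP (d n : ℕ) :
    MeasurableSet {x : Fin n → Fin d → ℝ | closeP 1 (Set.range x)} := by
  rw [closeP_set_eq]
  have : {x : Fin n → Fin d → ℝ | ∀ i j c, |x i c - x j c| ≤ 1} =
      ⋂ i, ⋂ j, ⋂ c, {x : Fin n → Fin d → ℝ | |x i c - x j c| ≤ 1} := by
    ext x; simp [Set.mem_iInter]
  rw [this]
  exact MeasurableSet.iInter fun i => MeasurableSet.iInter fun j =>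
    MeasurableSet.iInter fun c =>
    (isClosed_le ((continuous_apply_apply i c).sub
      (continuous_apply_apply j c)).abs continuous_const).measurableSet

lemma boxFinite (d n : ℕ) :
    volume (Set.univ.pi fun _ : Fin n => Set.univ.pi fun _ : Fin d => Set.Icc (-1:ℝ) 1) < ⊤ := by
  rw [volume_pi, Measure.pi_pi]
  refine ENNReal.prod_lt_top fun i _ => ?_
  rw [volume_pi, Measure.pi_pi]
  refine ENNReal.prod_lt_top fun c _ => ?_
  simp [Real.volume_Icc]


/-- For all integers `d ≥ 1`, `k ≥ 1`, `0 ≤ r ≤ k`, `0 ≤ s_Y ≤ k`,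
`0 ≤ s_Z ≤ min(k−r, k−s_Y)`, with `s := s_Y + s_Z` and `q := 3k − r − s`,
`∫_{(B)^{3k−r−s}} h_1(y) · h_1(y_{<r}, z) · h_1(y_{<s_Y}, z_{<s_Z}, w) dy dz dw
  ≤ ((k+1)((q−k)/2 + 1)²)^d`, where `B = [−1,1]^d ⊂ ℝ^d` with the `ℓ^∞` norm. -/
theorem stmt13 (d k r sY sZ q : ℕ) (hd : 1 ≤ d) (hk : 1 ≤ k)
    (hr : r ≤ k) (hsY : sY ≤ k) (hsZ : sZ ≤ min (k - r) (k - sY))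
    (hq : 3 * k - r - (sY + sZ) = q) :
    (∫ p in ((Set.univ.pi fun _ : Fin k =>
                (Set.univ.pi fun _ : Fin d => Set.Icc (-1 : ℝ) 1)) ×ˢ
             ((Set.univ.pi fun _ : Fin (k - r) =>
                (Set.univ.pi fun _ : Fin d => Set.Icc (-1 : ℝ) 1)) ×ˢ
              (Set.univ.pi fun _ : Fin (k - (sY + sZ)) =>
                (Set.univ.pi fun _ : Fin d => Set.Icc (-1 : ℝ) 1)))),
      ind (closeP 1 (Set.range p.1)) *
      ind (closeP 1 ((p.1 '' {i : Fin k | (i : ℕ) < r}) ∪ Set.range p.2.1)) *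
      ind (closeP 1 ((p.1 '' {i : Fin k | (i : ℕ) < sY}) ∪
                     (p.2.1 '' {i : Fin (k - r) | (i : ℕ) < sZ}) ∪ Set.range p.2.2)))
      ≤ (((k : ℝ) + 1) * (((q : ℝ) - (k : ℝ)) / 2 + 1) ^ 2) ^ d := by
  set a := k - r with ha
  set b := k - (sY + sZ) with hb
  set A := ((Set.univ.pi fun _ : Fin k =>
                (Set.univ.pi fun _ : Fin d => Set.Icc (-1 : ℝ) 1)) ×ˢ
             ((Set.univ.pi fun _ : Fin a =>
                (Set.univ.pi fun _ : Fin d => Set.Icc (-1 : ℝ) 1)) ×ˢ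
              (Set.univ.pi fun _ : Fin b =>
                (Set.univ.pi fun _ : Fin d => Set.Icc (-1 : ℝ) 1)))) with hA
  set f : (Fin k → Fin d → ℝ) × ((Fin a → Fin d → ℝ) × (Fin b → Fin d → ℝ)) → ℝ :=
    fun p => ind (closeP 1 (Set.range p.1)) *
      ind (closeP 1 ((p.1 '' {i : Fin k | (i : ℕ) < r}) ∪ Set.range p.2.1)) *
      ind (closeP 1 ((p.1 '' {i : Fin k | (i : ℕ) < sY}) ∪
                     (p.2.1 '' {i : Fin a | (i : ℕ) < sZ}) ∪ Set.range p.2.2)) with hf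
  set T : Set ((Fin k → Fin d → ℝ) × ((Fin a → Fin d → ℝ) × (Fin b → Fin d → ℝ))) :=
    {x : Fin k → Fin d → ℝ | closeP 1 (Set.range x)} ×ˢ
    ({x : Fin a → Fin d → ℝ | closeP 1 (Set.range x)} ×ˢ
     {x : Fin b → Fin d → ℝ | closeP 1 (Set.range x)}) with hT
  have hTm : MeasurableSet T :=
    (measurableSet_closeP d k).prod ((measurableSet_closeP d a).prod (measurableSet_closeP d b))
  set g : (Fin k → Fin d → ℝ) × ((Fin a → Fin d → ℝ) × (Fin b → Fin d → ℝ)) → ℝ :=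
    T.indicator (fun _ => (1:ℝ)) with hg
  have hfg : ∀ p, f p ≤ g p := by
    intro p
    by_cases hp : p ∈ T
    · rw [hg, Set.indicator_of_mem hp]
      calc f p ≤ 1 * 1 * 1 := by
            refine mul_le_mul (mul_le_mul (ind_le_one _) (ind_le_one _)
              (ind_nonneg _) zero_le_one) (ind_le_one _) (ind_nonneg _) (by norm_num)
        _ = 1 := by norm_num
    · rw [hg, Set.indicator_of_notMem hp]
      rw [hT, Set.mem_prod, Set.mem_prod] at hp
      push_neg at hp
      by_cases h1 : closeP 1 (Set.range p.1)
      · by_cases h2 : closeP 1 (Set.range p.2.1)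
        · have h3 : ¬ closeP 1 (Set.range p.2.2) := by
            simpa [h1, h2] using hp
          have : ¬ closeP 1 ((p.1 '' {i : Fin k | (i : ℕ) < sY}) ∪
              (p.2.1 '' {i : Fin a | (i : ℕ) < sZ}) ∪ Set.range p.2.2) := by
            intro hcl
            exact h3 (closeP_mono hcl (Set.subset_union_right))
          rw [hf]
          simp [ind_eq_zero this]
        · have : ¬ closeP 1 ((p.1 '' {i : Fin k | (i : ℕ) < r}) ∪ Set.range p.2.1) := by
            intro hcl
            exact h2 (closeP_mono hcl (Set.subset_union_right))
          rw [hf]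
          simp [ind_eq_zero this]
      · rw [hf]
        simp [ind_eq_zero h1]
  have hRHS0 : (0:ℝ) ≤ (((k : ℝ) + 1) * (((q : ℝ) - (k : ℝ)) / 2 + 1) ^ 2) ^ d := by
    positivity
  by_cases hi : IntegrableOn f A volume
  · have hTA : (volume.restrict A) T < ⊤ := by
      rw [Measure.restrict_apply hTm]
      refine lt_of_le_of_lt (measure_mono Set.inter_subset_right) ?_
      rw [hA, Measure.volume_eq_prod, Measure.prod_prod, Measure.volume_eq_prod,
        Measure.prod_prod]
      exact ENNReal.mul_lt_top (boxFinite d k)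
        (ENNReal.mul_lt_top (boxFinite d a) (boxFinite d b))
    have hgi : Integrable g (volume.restrict A) := by
      rw [hg]
      refine (integrable_indicator_iff hTm).2 ?_
      exact integrableOn_const hTA.ne
    have step1 : (∫ p in A, f p) ≤ ∫ p in A, g p := integral_mono hi hgi hfg
    have step2 : (∫ p in A, g p) = ((volume.restrict A) T).toReal := by
      rw [hg, integral_indicator_const (1:ℝ) hTm]
      simp
      rfl
    have step3 : (volume.restrict A) T ≤
        ENNReal.ofReal (k + 1) ^ d * (ENNReal.ofReal (a + 1) ^ d * ENNReal.ofReal (b + 1) ^ d) := by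
      rw [Measure.restrict_apply hTm, hT, hA, Set.prod_inter_prod, Set.prod_inter_prod,
        Measure.volume_eq_prod, Measure.prod_prod, Measure.volume_eq_prod, Measure.prod_prod]
      refine mul_le_mul' ?_ (mul_le_mul' ?_ ?_) <;>
        · rw [Set.inter_comm]; exact blockBound d _
    have hMne : (ENNReal.ofReal (k + 1) ^ d * (ENNReal.ofReal (a + 1) ^ d *
        ENNReal.ofReal (b + 1) ^ d)) ≠ ⊤ := by
      refine ENNReal.mul_ne_top (by simp [ENNReal.pow_ne_top, ENNReal.ofReal_ne_top])
        (ENNReal.mul_ne_top (by simp [ENNReal.pow_ne_top, ENNReal.ofReal_ne_top])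
          (by simp [ENNReal.pow_ne_top, ENNReal.ofReal_ne_top]))
    have step4 : ((volume.restrict A) T).toReal ≤
        ((k:ℝ) + 1) ^ d * (((a:ℝ) + 1) ^ d * ((b:ℝ) + 1) ^ d) := by
      refine le_trans (ENNReal.toReal_mono hMne step3) ?_
      rw [ENNReal.toReal_mul, ENNReal.toReal_mul, ENNReal.toReal_pow, ENNReal.toReal_pow,
        ENNReal.toReal_pow, ENNReal.toReal_ofReal (by positivity),
        ENNReal.toReal_ofReal (by positivity), ENNReal.toReal_ofReal (by positivity)]
    have harith : ((k:ℝ) + 1) ^ d * (((a:ℝ) + 1) ^ d * ((b:ℝ) + 1) ^ d) ≤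
        (((k : ℝ) + 1) * (((q : ℝ) - (k : ℝ)) / 2 + 1) ^ 2) ^ d := by
      have hqk : q = k + a + b := by omega
      have hq' : (q:ℝ) = (k:ℝ) + a + b := by exact_mod_cast congrArg (Nat.cast : ℕ → ℝ) hqk
      rw [← mul_pow, ← mul_pow]
      refine pow_le_pow_left₀ (by positivity) ?_ d
      rw [hq']
      have base : ((a:ℝ) + 1) * ((b:ℝ) + 1) ≤ (((k:ℝ) + a + b - k) / 2 + 1) ^ 2 := by
        nlinarith [sq_nonneg ((a:ℝ) - (b:ℝ))]
      have hk0 : (0:ℝ) ≤ (k:ℝ) := Nat.cast_nonneg k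
      have ha0 : (0:ℝ) ≤ (a:ℝ) := Nat.cast_nonneg a
      have hb0 : (0:ℝ) ≤ (b:ℝ) := Nat.cast_nonneg b
      nlinarith [base, sq_nonneg ((a:ℝ) - (b:ℝ))]
    calc (∫ p in A, f p) ≤ ∫ p in A, g p := step1
      _ = ((volume.restrict A) T).toReal := step2
      _ ≤ ((k:ℝ) + 1) ^ d * (((a:ℝ) + 1) ^ d * ((b:ℝ) + 1) ^ d) := step4
      _ ≤ _ := harith
  · rw [hf] at hi
    rw [integral_undef hi]
    exact hRHS0
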